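/- For all positive integers n and m, the partition function satisfies p(n) ≥ Σ_{k=1}^{m} (1/k!) · C(n-1, k-1), where C denotes the binomial coefficient. -/

import Mathlib

open Finset

/-- Partition function: number of partitions of n. -/
def partcount (n : ℕ) : ℕ := Fintype.card (Nat.Partition n)

namespace PartBound

/-- The composition of `n` associated to a subset of `Fin (n-1)`. -/
def toComp (n : ℕ) (s : Finset (Fin (n - 1))) : Composition n :=
  ((compositionAsSetEquiv n).symm s).toComposition

lemma toComp_injective (n : ℕ) : Function.Injective (toComp n) :=
  ((compositionEquiv n).symm.injective).comp (compositionAsSetEquiv n).symm.injective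

lemma boundaries_card {n : ℕ} (hn : 0 < n) (s : Finset (Fin (n - 1))) :
    ((compositionAsSetEquiv n).symm s).boundaries.card = s.card + 2 := by
  classical
  have hf : ∀ j : Fin (n - 1), (j : ℕ) + 1 < n + 1 := fun j => by
    have := j.isLt; omega
  set f : Fin (n - 1) → Fin (n + 1) := fun j => ⟨(j : ℕ) + 1, hf j⟩ with hfdef
  have hb : ((compositionAsSetEquiv n).symm s).boundaries =
      insert 0 (insert (Fin.last n) (s.image f)) := by
    ext i
    show i ∈ ({i : Fin n.succ |
        i = 0 ∨ i = Fin.last n ∨ ∃ (j : Fin (n - 1)) (_hj : j ∈ s), (i : ℕ) = j + 1}).toFinset ↔ _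
    simp only [Set.mem_toFinset, Set.mem_setOf_eq, mem_insert, mem_image, hfdef]
    constructor
    · rintro (h | h | ⟨j, hj, hij⟩)
      · exact Or.inl h
      · exact Or.inr (Or.inl h)
      · exact Or.inr (Or.inr ⟨j, hj, by simp [Fin.ext_iff, hij.symm]⟩)
    · rintro (h | h | ⟨j, hj, hij⟩)
      · exact Or.inl h
      · exact Or.inr (Or.inl h)
      · exact Or.inr (Or.inr ⟨j, hj, by simp [← hij]⟩)
  rw [hb]
  have hfinj : Function.Injective f := by
    intro a b hab
    simp only [hfdef, Fin.mk.injEq, add_left_inj] at hab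
    exact Fin.ext hab
  have hlast_notmem : Fin.last n ∉ s.image f := by
    simp only [mem_image, not_exists]
    rintro j ⟨hj, h⟩
    have h2 : (j : ℕ) + 1 = n := congrArg Fin.val h
    have := j.isLt; omega
  have h0_notmem : (0 : Fin (n + 1)) ∉ insert (Fin.last n) (s.image f) := by
    simp only [mem_insert, mem_image, not_or, not_exists]
    constructor
    · intro h
      have h2 : (0 : ℕ) = n := congrArg Fin.val h
      omega
    · rintro j ⟨hj, h⟩
      have h2 : (j : ℕ) + 1 = 0 := congrArg Fin.val h
      omega
  rw [Finset.card_insert_of_notMem h0_notmem, Finset.card_insert_of_notMem hlast_notmem,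
    Finset.card_image_of_injective _ hfinj]

lemma toComp_length {n : ℕ} (hn : 0 < n) (s : Finset (Fin (n - 1))) :
    (toComp n s).length = s.card + 1 := by
  rw [toComp, CompositionAsSet.toComposition_length, CompositionAsSet.length,
    boundaries_card hn s]
  omega

/-- The partition of `n` associated to a subset of `Fin (n-1)`. -/
def toPart (n : ℕ) (s : Finset (Fin (n - 1))) : Nat.Partition n :=
  Nat.Partition.ofComposition n (toComp n s)

lemma toPart_parts (n : ℕ) (s : Finset (Fin (n - 1))) :
    (toPart n s).parts = ((toComp n s).blocks : Multiset ℕ) := rfl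

lemma toPart_card {n : ℕ} (hn : 0 < n) (s : Finset (Fin (n - 1))) :
    Multiset.card (toPart n s).parts = s.card + 1 := by
  rw [toPart_parts, Multiset.coe_card, Composition.blocks_length, toComp_length hn s]

lemma key {n : ℕ} (hn : 0 < n) (k : ℕ) (hk : 1 ≤ k) :
    (n - 1).choose (k - 1) ≤
      k.factorial * (univ.filter fun P : Nat.Partition n => Multiset.card P.parts = k).card := by
  classical
  set A : Finset (Finset (Fin (n - 1))) := univ.powersetCard (k - 1) with hA
  have hAcard : A.card = (n - 1).choose (k - 1) := by
    simp [hA, Finset.card_powersetCard]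
  have hmem : ∀ s ∈ A, s.card = k - 1 := fun s hs => (Finset.mem_powersetCard.mp hs).2
  have hpc : ∀ s ∈ A, Multiset.card (toPart n s).parts = k := by
    intro s hs
    rw [toPart_card hn s, hmem s hs]
    omega
  have hmaps : ∀ s ∈ A, toPart n s ∈
      (univ.filter fun P : Nat.Partition n => Multiset.card P.parts = k) := by
    intro s hs
    simp only [mem_filter, mem_univ, true_and]
    exact hpc s hs
  have hfib : ∀ P ∈ (univ.filter fun P : Nat.Partition n => Multiset.card P.parts = k),
      (A.filter fun s => toPart n s = P).card ≤ k.factorial := by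
    intro P hP
    have hPk : Multiset.card P.parts = k := (mem_filter.mp hP).2
    have hinj : (A.filter fun s => toPart n s = P).card ≤
        (P.parts.toList.permutations.toFinset).card := by
      apply Finset.card_le_card_of_injOn (fun s => (toComp n s).blocks)
      · intro s hs
        rw [Finset.mem_coe, mem_filter] at hs
        rw [Finset.mem_coe, List.mem_toFinset, List.mem_permutations]
        have hparts : ((toComp n s).blocks : Multiset ℕ) = P.parts := by
          rw [← hs.2, toPart_parts]
        rw [← Multiset.coe_eq_coe, Multiset.coe_toList, hparts]
      · intro s1 _ s2 _ hbl
        exact toComp_injective n (Composition.ext hbl)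
    refine hinj.trans ?_
    calc (P.parts.toList.permutations.toFinset).card ≤ P.parts.toList.permutations.length :=
          P.parts.toList.permutations.toFinset_card_le
      _ = (P.parts.toList.length).factorial := List.length_permutations _
      _ = k.factorial := by rw [Multiset.length_toList, hPk]
  calc (n - 1).choose (k - 1) = A.card := hAcard.symm
    _ ≤ k.factorial *
        (univ.filter fun P : Nat.Partition n => Multiset.card P.parts = k).card :=
      Finset.card_le_mul_card_image_of_maps_to hmaps _ hfib

lemma sum_filter_le (n m : ℕ) :
    ∑ k ∈ Finset.Icc 1 m,
      (univ.filter fun P : Nat.Partition n => Multiset.card P.parts = k).card ≤ partcount n := by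
  classical
  have hdisj : ∀ k1 ∈ Finset.Icc 1 m, ∀ k2 ∈ Finset.Icc 1 m, k1 ≠ k2 →
      Disjoint (univ.filter fun P : Nat.Partition n => Multiset.card P.parts = k1)
        (univ.filter fun P : Nat.Partition n => Multiset.card P.parts = k2) := by
    intro k1 _ k2 _ hne
    apply Finset.disjoint_filter_filter'
    exact Set.disjoint_left.mpr (by rintro P h1 h2; exact hne (h1.symm.trans h2))
  rw [← Finset.card_biUnion hdisj, partcount, ← Finset.card_univ]
  exact Finset.card_le_card (Finset.subset_univ _)

end PartBound

theorem partition_lower_bound (n m : ℕ) (hn : 0 < n) (hm : 0 < m) :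
    (partcount n : ℝ) ≥
      ∑ k ∈ Finset.Icc 1 m, (1 / (Nat.factorial k : ℝ)) * (Nat.choose (n - 1) (k - 1)) := by
  rw [ge_iff_le]
  have h1 : ∑ k ∈ Finset.Icc 1 m, (1 / (Nat.factorial k : ℝ)) * (Nat.choose (n - 1) (k - 1)) ≤
      ∑ k ∈ Finset.Icc 1 m,
        ((Finset.univ.filter fun P : Nat.Partition n =>
          Multiset.card P.parts = k).card : ℝ) := by
    apply Finset.sum_le_sum
    intro k hk
    have hk1 : 1 ≤ k := (Finset.mem_Icc.mp hk).1
    have hkey := PartBound.key hn k hk1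
    have hfac : (0 : ℝ) < (Nat.factorial k : ℝ) := by
      exact_mod_cast Nat.factorial_pos k
    rw [one_div, inv_mul_le_iff₀ hfac]
    exact_mod_cast hkey
  refine h1.trans ?_
  have h2 := PartBound.sum_filter_le n m
  push_cast [← Nat.cast_sum]
  exact_mod_cast h2
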